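/- Let n ≥ 3 be odd. The number of order-n Latin squares whose inner distance equals (n−1)/2 is exactly 4n. -/
import Mathlib


/-- Distance between two symbols of `ZMod n`: the minimum of the two cyclic differences. -/
def zdist {n : ℕ} (a b : ZMod n) : ℕ := min (a - b).val (b - a).val

/-- An order-`n` Latin square: every row and every column is injective. -/
def IsLatin (n : ℕ) (L : Fin n → Fin n → ZMod n) : Prop :=
  (∀ i, Function.Injective (L i)) ∧ ∀ j, Function.Injective fun i => L i j

/-- The inner distance of a square: the minimum of `zdist` over all pairs of
horizontally or vertically adjacent cells. -/
noncomputable def innerDist (n : ℕ) (L : Fin n → Fin n → ZMod n) : ℕ :=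
  sInf { d : ℕ |
    (∃ i : Fin n, ∃ j : ℕ, ∃ hj : j + 1 < n,
      d = zdist (L i ⟨j, Nat.lt_of_succ_lt hj⟩) (L i ⟨j + 1, hj⟩)) ∨
    (∃ j : Fin n, ∃ i : ℕ, ∃ hi : i + 1 < n,
      d = zdist (L ⟨i, Nat.lt_of_succ_lt hi⟩ j) (L ⟨i + 1, hi⟩ j)) }

namespace StmtAux

variable {n : ℕ}
lemma val_K (k : ℕ) (hk : n = 2 * k + 1) (h1 : 1 ≤ k) : ((k : ZMod n)).val = k :=
  ZMod.val_cast_of_lt (by omega)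

lemma K_ne_zero (k : ℕ) (hk : n = 2 * k + 1) (h1 : 1 ≤ k) : (k : ZMod n) ≠ 0 := by
  intro h
  have h2 := val_K (n := n) k hk h1
  rw [h] at h2
  haveI : NeZero n := ⟨by omega⟩
  simp [ZMod.val_zero] at h2
  omega

lemma val_negK (k : ℕ) (hk : n = 2 * k + 1) (h1 : 1 ≤ k) :
    ((-(k : ZMod n))).val = k + 1 := by
  haveI : NeZero n := ⟨by omega⟩
  rw [ZMod.neg_val, if_neg (K_ne_zero k hk h1), val_K k hk h1]
  omega

lemma zdist_le (k : ℕ) (hk : n = 2 * k + 1) (a b : ZMod n) : zdist a b ≤ k := by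
  haveI : NeZero n := ⟨by omega⟩
  unfold zdist
  rcases eq_or_ne a b with h | h
  · simp [h]
  · have h1 : a - b ≠ 0 := sub_ne_zero.mpr h
    have h2 : b - a = -(a - b) := by ring
    rw [h2, ZMod.neg_val, if_neg h1]
    have h3 := ZMod.val_lt (a - b)
    have h4 : 0 < (a - b).val :=
      Nat.pos_of_ne_zero (fun h => h1 ((ZMod.val_eq_zero _).mp h))
    omega

lemma zdist_eq (k : ℕ) (hk : n = 2 * k + 1) (h1 : 1 ≤ k) (a b : ZMod n) :
    zdist a b = k ↔ a - b = (k : ZMod n) ∨ b - a = (k : ZMod n) := by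
  haveI : NeZero n := ⟨by omega⟩
  constructor
  · intro h
    unfold zdist at h
    rcases min_eq_iff.mp h with ⟨h2, _⟩ | ⟨h2, _⟩
    · left
      have : ((a - b).val : ZMod n) = ((k : ℕ) : ZMod n) := by rw [h2]
      rwa [ZMod.natCast_val, ZMod.cast_id] at this
    · right
      have : ((b - a).val : ZMod n) = ((k : ℕ) : ZMod n) := by rw [h2]
      rwa [ZMod.natCast_val, ZMod.cast_id] at this
  · intro h
    unfold zdist
    rcases h with h | h
    · have h2 : b - a = -(k : ZMod n) := by rw [← h]; ring
      rw [h, h2, val_K k hk h1, val_negK k hk h1]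
      omega
    · have h2 : a - b = -(k : ZMod n) := by rw [← h]; ring
      rw [h, h2, val_K k hk h1, val_negK k hk h1]
      omega

lemma telescope (g : Fin n → ZMod n) (e : ZMod n)
    (h : ∀ j (hj : j + 1 < n), g ⟨j + 1, hj⟩ = g ⟨j, Nat.lt_of_succ_lt hj⟩ + e)
    (h0 : 0 < n) : ∀ j : Fin n, g j = g ⟨0, h0⟩ + (j.val : ZMod n) * e := by
  have key : ∀ m (hm : m < n), g ⟨m, hm⟩ = g ⟨0, h0⟩ + (m : ZMod n) * e := by
    intro m
    induction m with
    | zero => intro hm; simp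
    | succ p ih =>
      intro hm
      rw [h p hm, ih (Nat.lt_of_succ_lt hm)]
      push_cast
      ring
  intro j
  exact key j.1 j.2

lemma conststep (K : ZMod n) (g : Fin n → ZMod n) (hg : Function.Injective g)
    (hadj : ∀ j (hj : j + 1 < n),
      g ⟨j + 1, hj⟩ - g ⟨j, Nat.lt_of_succ_lt hj⟩ = K ∨
      g ⟨j + 1, hj⟩ - g ⟨j, Nat.lt_of_succ_lt hj⟩ = -K) :
    ∀ j (hj : j + 1 < n),
      g ⟨j + 1, hj⟩ - g ⟨j, Nat.lt_of_succ_lt hj⟩ =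
        g ⟨1, by omega⟩ - g ⟨0, by omega⟩ := by
  intro j
  induction j with
  | zero => intro hj; rfl
  | succ m ih =>
    intro hj
    have hm1 : m + 1 < n := Nat.lt_of_succ_lt hj
    have ihm := ih hm1
    have h1 := hadj (m + 1) hj
    have h0 := hadj m hm1
    have contra : g ⟨m + 1 + 1, hj⟩ - g ⟨m + 1, hm1⟩ =
        -(g ⟨m + 1, hm1⟩ - g ⟨m, Nat.lt_of_succ_lt hm1⟩) → False := by
      intro hc
      have heq : g ⟨m + 2, hj⟩ = g ⟨m, Nat.lt_of_succ_lt hm1⟩ := by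
        linear_combination hc
      have h2 := hg heq
      rw [Fin.mk.injEq] at h2
      omega
    rcases h1 with h1 | h1 <;> rcases h0 with h0 | h0
    · rw [h1, ← h0]; exact ihm
    · exact absurd (by rw [h1, h0]; try ring) contra
    · exact absurd (by rw [h1, h0]; try ring) contra
    · rw [h1, ← h0]; exact ihm

lemma dzero (K d x y z : ZMod n)
    (hx : x = K ∨ x = -K) (hy : y = K ∨ y = -K) (hz : z = K ∨ z = -K)
    (h1 : y - x = d) (h2 : z - y = d) (u : ZMod n) (hu : u * 2 = 1) : d = 0 := by
  have h2d : 2 * d = 0 ∨ d = 0 := by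
    rcases hx with rfl | rfl <;> rcases hy with rfl | rfl <;> rcases hz with rfl | rfl <;>
      first
        | (right; linear_combination -h1)
        | (right; linear_combination -h2)
        | (left; linear_combination -h1 - h2)
  rcases h2d with h | h
  · linear_combination u * h - d * hu
  · exact h

def sgn (n k : ℕ) (b : Bool) : ZMod n := if b then (k : ZMod n) else -(k : ZMod n)

def G (n k : ℕ) (p : ZMod n × Bool × Bool) (i j : Fin n) : ZMod n :=
  p.1 + sgn n k p.2.1 * (i.val : ZMod n) + sgn n k p.2.2 * (j.val : ZMod n)

variable {n : ℕ}

lemma two_K (k : ℕ) (hk : n = 2 * k + 1) : (2 : ZMod n) * (k : ZMod n) = -1 := by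
  have h : ((2 * k + 1 : ℕ) : ZMod n) = 0 := by rw [← hk]; exact ZMod.natCast_self n
  push_cast at h
  linear_combination h

lemma sgn_unit (k : ℕ) (hk : n = 2 * k + 1) (b : Bool) :
    ∃ u : ZMod n, u * sgn n k b = 1 := by
  cases b
  · refine ⟨2, ?_⟩
    have h : sgn n k false = -(k : ZMod n) := by simp [sgn]
    rw [h]; linear_combination -(two_K k hk)
  · refine ⟨-2, ?_⟩
    have h : sgn n k true = (k : ZMod n) := by simp [sgn]
    rw [h]; linear_combination -(two_K k hk)

lemma cancel (a x y u : ZMod n) (hu : u * a = 1) (h : a * x = a * y) : x = y := by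
  linear_combination u * h + (y - x) * hu

lemma sgn_pm (k : ℕ) (b : Bool) : sgn n k b = (k : ZMod n) ∨ sgn n k b = -(k : ZMod n) := by
  unfold sgn; cases b <;> simp

lemma casteq (a b : Fin n) (h : (a.val : ZMod n) = (b.val : ZMod n)) : a = b := by
  have h2 := congrArg ZMod.val h
  rw [ZMod.val_cast_of_lt a.2, ZMod.val_cast_of_lt b.2] at h2
  exact Fin.ext h2

lemma G_latin (k : ℕ) (hk : n = 2 * k + 1) (h1 : 1 ≤ k) (p : ZMod n × Bool × Bool) :
    IsLatin n (G n k p) := by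
  obtain ⟨c, s, t⟩ := p
  constructor
  · intro i a b hab
    simp only [G] at hab
    obtain ⟨u, hu⟩ := sgn_unit k hk t
    exact casteq a b (cancel _ _ _ u hu (by linear_combination hab))
  · intro j a b hab
    simp only [G] at hab
    obtain ⟨u, hu⟩ := sgn_unit k hk s
    exact casteq a b (cancel _ _ _ u hu (by linear_combination hab))



lemma G_inner (k : ℕ) (hk : n = 2 * k + 1) (h1 : 1 ≤ k) (p : ZMod n × Bool × Bool) :
    innerDist n (G n k p) = k := by
  obtain ⟨c, s, t⟩ := p
  have zk : ∀ a b : ZMod n, (a - b = (k : ZMod n) ∨ a - b = -(k : ZMod n)) → zdist a b = k := by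
    intro a b h
    rcases h with h | h
    · exact (zdist_eq k hk h1 a b).mpr (Or.inl h)
    · exact (zdist_eq k hk h1 a b).mpr (Or.inr (by linear_combination -h))
  have hhoriz : ∀ (i : Fin n) (j : ℕ) (hj : j + 1 < n),
      zdist (G n k (c, s, t) i ⟨j, Nat.lt_of_succ_lt hj⟩) (G n k (c, s, t) i ⟨j + 1, hj⟩) = k := by
    intro i j hj
    apply zk
    have hdiff : G n k (c, s, t) i ⟨j, Nat.lt_of_succ_lt hj⟩ - G n k (c, s, t) i ⟨j + 1, hj⟩
        = -sgn n k t := by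
      simp only [G]
      push_cast
      ring
    rcases sgn_pm k t with h | h
    · right; rw [hdiff, h]
    · left; rw [hdiff, h]; ring
  have hvert : ∀ (j : Fin n) (i : ℕ) (hi : i + 1 < n),
      zdist (G n k (c, s, t) ⟨i, Nat.lt_of_succ_lt hi⟩ j) (G n k (c, s, t) ⟨i + 1, hi⟩ j) = k := by
    intro j i hi
    apply zk
    have hdiff : G n k (c, s, t) ⟨i, Nat.lt_of_succ_lt hi⟩ j - G n k (c, s, t) ⟨i + 1, hi⟩ j
        = -sgn n k s := by
      simp only [G]
      push_cast
      ring
    rcases sgn_pm k s with h | h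
    · right; rw [hdiff, h]
    · left; rw [hdiff, h]; ring
  unfold innerDist
  apply le_antisymm
  · apply Nat.sInf_le
    exact Or.inl ⟨⟨0, by omega⟩, 0, by omega, (hhoriz ⟨0, by omega⟩ 0 (by omega)).symm⟩
  · apply le_csInf
    · exact ⟨_, Or.inl ⟨⟨0, by omega⟩, 0, by omega, rfl⟩⟩
    · rintro d (⟨i, j, hj, rfl⟩ | ⟨j, i, hi, rfl⟩)
      · exact (hhoriz i j hj).ge
      · exact (hvert j i hi).ge

lemma G_inj (k : ℕ) (hk : n = 2 * k + 1) (h1 : 1 ≤ k) : Function.Injective (G n k) := by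
  rintro ⟨c, s, t⟩ ⟨c', s', t'⟩ h
  have hKneg : (k : ZMod n) ≠ -(k : ZMod n) := by
    intro hK
    have hv := val_K (n := n) k hk h1
    have hv2 := val_negK (n := n) k hk h1
    rw [← hK] at hv2
    omega
  have sgninj : ∀ b b' : Bool, sgn n k b = sgn n k b' → b = b' := by
    intro b b' hbb
    cases b <;> cases b'
    · rfl
    · exact absurd (by simpa [sgn] using hbb.symm) hKneg
    · exact absurd (by simpa [sgn] using hbb) hKneg
    · rfl
  have h00 := congrFun (congrFun h ⟨0, by omega⟩) ⟨0, by omega⟩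
  have h10 := congrFun (congrFun h ⟨1, by omega⟩) ⟨0, by omega⟩
  have h01 := congrFun (congrFun h ⟨0, by omega⟩) ⟨1, by omega⟩
  simp only [G] at h00 h10 h01
  push_cast at h00 h10 h01
  have hc : c = c' := by linear_combination h00
  have hs : s = s' := sgninj _ _ (by linear_combination h10 - h00)
  have ht : t = t' := sgninj _ _ (by linear_combination h01 - h00)
  subst hc; subst hs; subst ht; rfl

lemma reconstruct (k : ℕ) (hk : n = 2 * k + 1) (h1 : 1 ≤ k) (L : Fin n → Fin n → ZMod n)
    (hL : IsLatin n L) (hI : innerDist n L = k) : ∃ p, G n k p = L := by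
  have h0n : 0 < n := by omega
  have h1n : 1 < n := by omega
  have adjh : ∀ (i : Fin n) (j : ℕ) (hj : j + 1 < n),
      L i ⟨j + 1, hj⟩ - L i ⟨j, Nat.lt_of_succ_lt hj⟩ = (k : ZMod n) ∨
      L i ⟨j + 1, hj⟩ - L i ⟨j, Nat.lt_of_succ_lt hj⟩ = -(k : ZMod n) := by
    intro i j hj
    have hge : k ≤ zdist (L i ⟨j, Nat.lt_of_succ_lt hj⟩) (L i ⟨j + 1, hj⟩) := by
      rw [← hI]
      exact Nat.sInf_le (Or.inl ⟨i, j, hj, rfl⟩)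
    have hle := zdist_le k hk (L i ⟨j, Nat.lt_of_succ_lt hj⟩) (L i ⟨j + 1, hj⟩)
    rcases (zdist_eq k hk h1 _ _).mp (le_antisymm hle hge) with h | h
    · right; linear_combination -h
    · left; exact h
  have adjv : ∀ (j : Fin n) (i : ℕ) (hi : i + 1 < n),
      L ⟨i + 1, hi⟩ j - L ⟨i, Nat.lt_of_succ_lt hi⟩ j = (k : ZMod n) ∨
      L ⟨i + 1, hi⟩ j - L ⟨i, Nat.lt_of_succ_lt hi⟩ j = -(k : ZMod n) := by
    intro j i hi
    have hge : k ≤ zdist (L ⟨i, Nat.lt_of_succ_lt hi⟩ j) (L ⟨i + 1, hi⟩ j) := by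
      rw [← hI]
      exact Nat.sInf_le (Or.inr ⟨j, i, hi, rfl⟩)
    have hle := zdist_le k hk (L ⟨i, Nat.lt_of_succ_lt hi⟩ j) (L ⟨i + 1, hi⟩ j)
    rcases (zdist_eq k hk h1 _ _).mp (le_antisymm hle hge) with h | h
    · right; linear_combination -h
    · left; exact h
  let rs : Fin n → ZMod n := fun i => L i ⟨1, h1n⟩ - L i ⟨0, h0n⟩
  let cs : Fin n → ZMod n := fun j => L ⟨1, h1n⟩ j - L ⟨0, h0n⟩ j
  have hrow : ∀ (i : Fin n) (j : ℕ) (hj : j + 1 < n),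
      L i ⟨j + 1, hj⟩ - L i ⟨j, Nat.lt_of_succ_lt hj⟩ = rs i :=
    fun i => conststep (k : ZMod n) (L i) (hL.1 i) (adjh i)
  have hcol : ∀ (j : Fin n) (i : ℕ) (hi : i + 1 < n),
      L ⟨i + 1, hi⟩ j - L ⟨i, Nat.lt_of_succ_lt hi⟩ j = cs j :=
    fun j => conststep (k : ZMod n) (fun i' => L i' j) (hL.2 j) (adjv j)
  have rsval : ∀ i : Fin n, rs i = (k : ZMod n) ∨ rs i = -(k : ZMod n) :=
    fun i => adjh i 0 (by omega)
  have csval : ∀ j : Fin n, cs j = (k : ZMod n) ∨ cs j = -(k : ZMod n) :=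
    fun j => adjv j 0 (by omega)
  have box : ∀ (i : ℕ) (hi : i + 1 < n) (j : ℕ) (hj : j + 1 < n),
      rs ⟨i + 1, hi⟩ - rs ⟨i, Nat.lt_of_succ_lt hi⟩ =
        cs ⟨j + 1, hj⟩ - cs ⟨j, Nat.lt_of_succ_lt hj⟩ := by
    intro i hi j hj
    have A := hrow ⟨i + 1, hi⟩ j hj
    have B := hrow ⟨i, Nat.lt_of_succ_lt hi⟩ j hj
    have C := hcol ⟨j + 1, hj⟩ i hi
    have D := hcol ⟨j, Nat.lt_of_succ_lt hj⟩ i hi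
    linear_combination -A + B + C - D
  have inv2 : ((k : ZMod n) + 1) * 2 = 1 := by linear_combination two_K k hk
  have hd0 : cs ⟨1, h1n⟩ - cs ⟨0, h0n⟩ = 0 := by
    apply dzero (k : ZMod n) _ (rs ⟨0, h0n⟩) (rs ⟨1, h1n⟩) (rs ⟨2, by omega⟩)
      (rsval _) (rsval _) (rsval _) ?_ ?_ ((k : ZMod n) + 1) inv2
    · exact box 0 (by omega) 0 (by omega)
    · exact box 1 (by omega) 0 (by omega)
  have he0 : rs ⟨1, h1n⟩ - rs ⟨0, h0n⟩ = 0 := by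
    apply dzero (k : ZMod n) _ (cs ⟨0, h0n⟩) (cs ⟨1, h1n⟩) (cs ⟨2, by omega⟩)
      (csval _) (csval _) (csval _) ?_ ?_ ((k : ZMod n) + 1) inv2
    · exact (box 0 (by omega) 0 (by omega)).symm
    · exact (box 0 (by omega) 1 (by omega)).symm
  have hrsconst : ∀ i : Fin n, rs i = rs ⟨0, h0n⟩ := by
    have htel := telescope rs 0 (fun i hi => by
      have hb := box i hi 0 (by omega)
      rw [hd0] at hb
      linear_combination hb) h0n
    intro i
    rw [htel i, mul_zero, add_zero]
  have hcolumn0 : ∀ i : Fin n, L i ⟨0, h0n⟩ =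
      L ⟨0, h0n⟩ ⟨0, h0n⟩ + (i.val : ZMod n) * cs ⟨0, h0n⟩ :=
    telescope (fun i' => L i' ⟨0, h0n⟩) (cs ⟨0, h0n⟩)
      (fun i hi => by rw [← hcol ⟨0, h0n⟩ i hi]; ring) h0n
  have hformula : ∀ i j : Fin n, L i j =
      L ⟨0, h0n⟩ ⟨0, h0n⟩ + (i.val : ZMod n) * cs ⟨0, h0n⟩ + (j.val : ZMod n) * rs ⟨0, h0n⟩ := by
    intro i j
    have htel := telescope (L i) (rs i) (fun j' hj' => by rw [← hrow i j' hj']; ring) h0n j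
    rw [htel, hcolumn0 i, hrsconst i]
  rcases csval ⟨0, h0n⟩ with hc | hc <;> rcases rsval ⟨0, h0n⟩ with hr | hr
  · refine ⟨(L ⟨0, h0n⟩ ⟨0, h0n⟩, true, true), ?_⟩
    funext i j
    rw [hformula i j, hc, hr]
    simp only [G, sgn]
    norm_num
    ring
  · refine ⟨(L ⟨0, h0n⟩ ⟨0, h0n⟩, true, false), ?_⟩
    funext i j
    rw [hformula i j, hc, hr]
    simp only [G, sgn]
    norm_num
    ring
  · refine ⟨(L ⟨0, h0n⟩ ⟨0, h0n⟩, false, true), ?_⟩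
    funext i j
    rw [hformula i j, hc, hr]
    simp only [G, sgn]
    norm_num
    ring
  · refine ⟨(L ⟨0, h0n⟩ ⟨0, h0n⟩, false, false), ?_⟩
    funext i j
    rw [hformula i j, hc, hr]
    simp only [G, sgn]
    norm_num
    ring

end StmtAux

theorem stmt1 (n : ℕ) (hn : 3 ≤ n) (ho : Odd n) :
    {L : Fin n → Fin n → ZMod n | IsLatin n L ∧ innerDist n L = (n - 1) / 2}.ncard
      = 4 * n := by
  obtain ⟨m, hm⟩ := ho
  obtain ⟨k, hk, hsub, hk1⟩ : ∃ k, n = 2 * k + 1 ∧ (n - 1) / 2 = k ∧ 1 ≤ k :=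
    ⟨(n - 1) / 2, by omega, rfl, by omega⟩
  rw [hsub]
  haveI : NeZero n := ⟨by omega⟩
  have hset : {L : Fin n → Fin n → ZMod n | IsLatin n L ∧ innerDist n L = k}
      = Set.range (StmtAux.G n k) := by
    ext L
    simp only [Set.mem_setOf_eq, Set.mem_range]
    constructor
    · rintro ⟨hL, hI⟩
      exact StmtAux.reconstruct k hk hk1 L hL hI
    · rintro ⟨p, rfl⟩
      exact ⟨StmtAux.G_latin k hk hk1 p, StmtAux.G_inner k hk hk1 p⟩
  rw [hset, ← Nat.card_coe_set_eq, Nat.card_range_of_injective (StmtAux.G_inj k hk hk1)]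
  simp [Nat.card_eq_fintype_card, ZMod.card]
  ring
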